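/- Let p ≥ 0 and m ≥ 0, and let Ξ_{p,m} be the p-open knot vector consisting of the knot 0 repeated p+1 times, the interior knots 1/2^m, 2/2^m, …, (2^m−1)/2^m (each once), and the knot 1 repeated p+1 times. Then the associated B-spline basis functions {b_j^p}_{j=0}^{2^m+p−1}, restricted to [0,1), are linearly independent over ℝ; consequently the spline space S_p(Ξ_{p,m}) = span{b_j^p : 0 ≤ j ≤ 2^m+p−1} (as a space of functions on [0,1)) has dimension 2^m + p. -/

import Mathlib

/-- The B-spline basis functions `b_j^p` associated with a knot sequence `ξ`, defined by the
Cox–de Boor recursion, with the convention that any term with zero denominator is zero: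
`b_j^0(x) = 1` if `ξ_j ≤ x < ξ_{j+1}` and `0` otherwise, and
`b_j^{p}(x) = (x−ξ_j)/(ξ_{j+p}−ξ_j)·b_j^{p−1}(x) + (ξ_{j+p+1}−x)/(ξ_{j+p+1}−ξ_{j+1})·b_{j+1}^{p−1}(x)`. -/
noncomputable def bspline (ξ : ℕ → ℝ) : ℕ → ℕ → ℝ → ℝ
  | 0, j, x => if ξ j ≤ x ∧ x < ξ (j + 1) then 1 else 0
  | p + 1, j, x =>
      (if ξ (j + p + 1) = ξ j then 0
        else (x - ξ j) / (ξ (j + p + 1) - ξ j) * bspline ξ p j x) +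
      (if ξ (j + p + 2) = ξ (j + 1) then 0
        else (ξ (j + p + 2) - x) / (ξ (j + p + 2) - ξ (j + 1)) * bspline ξ p (j + 1) x)

/-- `ξ` is a `p`-open knot vector with `k` control points: `0 ≤ p ≤ k`, the entries
`ξ_0, …, ξ_{k+p}` are nondecreasing and lie in `[0,1]`, the first `p+1` knots equal `0`
and the last `p+1` knots equal `1`. -/
def IsOpenKnotVector (ξ : ℕ → ℝ) (p k : ℕ) : Prop :=
  p ≤ k ∧
  (∀ j ≤ p, ξ j = 0) ∧
  (∀ j, k ≤ j → j ≤ k + p → ξ j = 1) ∧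
  (∀ i j, i ≤ j → j ≤ k + p → ξ i ≤ ξ j) ∧
  (∀ j ≤ k + p, ξ j ∈ Set.Icc (0 : ℝ) 1)

/-- The uniform `p`-open knot vector `Ξ_{p,m}` on level `m`: the knot `0` repeated `p+1`
times, the interior knots `1/2^m, …, (2^m−1)/2^m`, and the knot `1` repeated `p+1` times;
as a ℕ-indexed sequence, `ξ_j = clamp_{[0,1]}((j−p)/2^m)`. -/
noncomputable def uniformKnots (p m : ℕ) (j : ℕ) : ℝ :=
  min 1 (max 0 (((j : ℝ) - (p : ℝ)) / 2 ^ m))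

lemma bspline_zero_eq (ξ : ℕ → ℝ) (j : ℕ) (x : ℝ) :
    bspline ξ 0 j x = if ξ j ≤ x ∧ x < ξ (j+1) then 1 else 0 := rfl

lemma bspline_succ_eq (ξ : ℕ → ℝ) (q j : ℕ) (x : ℝ) :
    bspline ξ (q+1) j x =
      (if ξ (j + q + 1) = ξ j then 0
        else (x - ξ j) / (ξ (j + q + 1) - ξ j) * bspline ξ q j x) +
      (if ξ (j + q + 2) = ξ (j + 1) then 0
        else (ξ (j + q + 2) - x) / (ξ (j + q + 2) - ξ (j + 1)) * bspline ξ q (j + 1) x) := rfl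

lemma bspline_zero_of_lt (ξ : ℕ → ℝ) (hm : Monotone ξ) :
    ∀ (q j : ℕ) (x : ℝ), x < ξ j → bspline ξ q j x = 0 := by
  intro q
  induction q with
  | zero => intro j x hx; rw [bspline_zero_eq, if_neg]; rintro ⟨h1, -⟩; linarith
  | succ q ih =>
    intro j x hx
    rw [bspline_succ_eq, ih j x hx, ih (j+1) x (lt_of_lt_of_le hx (hm (Nat.le_succ j)))]
    split <;> split <;> ring

lemma bspline_zero_of_ge (ξ : ℕ → ℝ) (hm : Monotone ξ) :
    ∀ (q j : ℕ) (x : ℝ), ξ (j + q + 1) ≤ x → bspline ξ q j x = 0 := by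
  intro q
  induction q with
  | zero => intro j x hx; rw [bspline_zero_eq, if_neg]; rintro ⟨-, h2⟩; linarith
  | succ q ih =>
    intro j x hx
    have h1 : ξ (j + q + 1) ≤ x := le_trans (hm (by omega)) hx
    have h2 : ξ ((j+1) + q + 1) ≤ x := by
      have : (j+1) + q + 1 = j + (q+1) + 1 := by omega
      rw [this]; exact hx
    rw [bspline_succ_eq, ih j x h1, ih (j+1) x h2]
    split <;> split <;> ring

lemma bspline_nonneg (ξ : ℕ → ℝ) (hm : Monotone ξ) :
    ∀ (q j : ℕ) (x : ℝ), 0 ≤ bspline ξ q j x := by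
  intro q
  induction q with
  | zero => intro j x; rw [bspline_zero_eq]; split <;> norm_num
  | succ q ih =>
    intro j x
    rw [bspline_succ_eq]
    have t1 : (0:ℝ) ≤ (if ξ (j + q + 1) = ξ j then 0
        else (x - ξ j) / (ξ (j + q + 1) - ξ j) * bspline ξ q j x) := by
      split
      · exact le_refl 0
      · rename_i hne
        rcases lt_or_ge x (ξ j) with h | h
        · rw [bspline_zero_of_lt ξ hm q j x h, mul_zero]
        · have hlt : ξ j < ξ (j + q + 1) := lt_of_le_of_ne (hm (by omega)) (Ne.symm hne)
          exact mul_nonneg (div_nonneg (by linarith) (by linarith)) (ih j x)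
    have t2 : (0:ℝ) ≤ (if ξ (j + q + 2) = ξ (j + 1) then 0
        else (ξ (j + q + 2) - x) / (ξ (j + q + 2) - ξ (j + 1)) * bspline ξ q (j + 1) x) := by
      split
      · exact le_refl 0
      · rename_i hne
        rcases le_or_gt (ξ (j + q + 2)) x with h | h
        · rw [bspline_zero_of_ge ξ hm q (j+1) x (by
            have : (j+1) + q + 1 = j + q + 2 := by omega
            rw [this]; exact h), mul_zero]
        · have hlt : ξ (j + 1) < ξ (j + q + 2) := lt_of_le_of_ne (hm (by omega)) (Ne.symm hne)
          exact mul_nonneg (div_nonneg (by linarith) (by linarith)) (ih (j+1) x)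
    linarith

lemma bspline_pos (ξ : ℕ → ℝ) (hm : Monotone ξ) :
    ∀ (q j : ℕ) (x : ℝ), ξ j < x → x < ξ (j+1) → 0 < bspline ξ q j x := by
  intro q
  induction q with
  | zero => intro j x h1 h2; rw [bspline_zero_eq, if_pos ⟨le_of_lt h1, h2⟩]; norm_num
  | succ q ih =>
    intro j x h1 h2
    have hb2 : bspline ξ q (j+1) x = 0 := bspline_zero_of_lt ξ hm q (j+1) x h2
    have hmm : ξ (j+1) ≤ ξ (j + q + 1) := hm (by omega)
    have hlt : ξ j < ξ (j + q + 1) := by linarith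
    rw [bspline_succ_eq, hb2]
    rw [if_neg (ne_of_gt hlt)]
    have hpos : 0 < (x - ξ j) / (ξ (j + q + 1) - ξ j) * bspline ξ q j x := by
      have := ih j x h1 h2
      have h3 : 0 < x - ξ j := by linarith
      have h4 : 0 < ξ (j + q + 1) - ξ j := by linarith
      positivity
    split <;> linarith

lemma uk_mono (p m : ℕ) : Monotone (uniformKnots p m) := by
  intro i j hij
  unfold uniformKnots
  have h : ((i:ℝ) - p)/2^m ≤ ((j:ℝ) - p)/2^m := by
    gcongr
  exact min_le_min le_rfl (max_le_max le_rfl h)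

lemma uk_eq_zero (p m j : ℕ) (hj : j ≤ p) : uniformKnots p m j = 0 := by
  unfold uniformKnots
  have h : ((j:ℝ) - p)/2^m ≤ 0 := by
    apply div_nonpos_of_nonpos_of_nonneg
    · have : (j:ℝ) ≤ p := by exact_mod_cast hj
      linarith
    · positivity
  rw [max_eq_left h, min_eq_right (by norm_num)]

lemma uk_add (p m r : ℕ) : uniformKnots p m (p + r) = min 1 ((r:ℝ)/2^m) := by
  unfold uniformKnots
  have h : (((p + r : ℕ):ℝ) - p) = (r:ℝ) := by push_cast; ring
  rw [h, max_eq_right (by positivity)]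

lemma uk_add_ge (p m r : ℕ) (hr : 1 ≤ r) : (1:ℝ)/2^m ≤ uniformKnots p m (p + r) := by
  rw [uk_add]
  rcases le_total (1:ℝ) ((r:ℝ)/2^m) with h | h
  · rw [min_eq_left h]
    calc (1:ℝ)/2^m ≤ 1 := by
          rw [div_le_one (by positivity)]; exact one_le_pow₀ (by norm_num)
      _ ≤ _ := le_refl 1
  · rw [min_eq_right h]
    gcongr
    exact_mod_cast hr

lemma uk_pos (p m j : ℕ) (hj : p < j) : 0 < uniformKnots p m j := by
  have : j = p + (j - p) := by omega
  rw [this]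
  calc (0:ℝ) < 1/2^m := by positivity
    _ ≤ _ := uk_add_ge p m (j - p) (by omega)

lemma uk_le_one (p m j : ℕ) : uniformKnots p m j ≤ 1 := min_le_left _ _

lemma uk_p1 (p m : ℕ) : uniformKnots p m (p+1) = 1/2^m := by
  have h := uk_add p m 1
  rw [h]
  push_cast
  rw [min_eq_right]
  rw [div_le_one (by positivity)]
  exact one_le_pow₀ (by norm_num)

set_option maxHeartbeats 1000000 in
lemma bspline_bounds (p m : ℕ) :
    ∀ q, q ≤ p → ∀ j, p - q ≤ j → j ≤ p →
    ∃ c C : ℝ, 0 < c ∧ 0 < C ∧ ∀ x : ℝ, 0 < x → x < 1/2^m/2 →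
      c * x ^ (j - (p - q)) ≤ bspline (uniformKnots p m) q j x ∧
      bspline (uniformKnots p m) q j x ≤ C * x ^ (j - (p - q)) := by
  have hH : (0:ℝ) < 1/2^m := by positivity
  set H : ℝ := 1/2^m with hHdef
  intro q
  induction q with
  | zero =>
    intro _ j hj1 hj2
    have hj : j = p := by omega
    refine ⟨1, 1, one_pos, one_pos, fun x hx1 hx2 => ?_⟩
    have hval : bspline (uniformKnots p m) 0 j x = 1 := by
      rw [bspline_zero_eq, if_pos]
      constructor
      · rw [uk_eq_zero p m j hj2]; linarith
      · have hj1' : j + 1 = p + 1 := by omega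
        rw [hj1', uk_p1, ← hHdef]; linarith
    rw [hval]
    have he : j - (p - 0) = 0 := by omega
    rw [he]
    norm_num
  | succ q ih =>
    intro hq j hj1 hj2
    have hqp : q + 1 ≤ p := hq
    have hmono := uk_mono p m
    rcases Nat.lt_or_ge j (p - q) with hcase | hcase
    · -- Case A : j = p - q - 1, j + q + 1 = p
      have hjeq : j + q + 1 = p := by omega
      have hj1p : j + 1 ≤ p := by omega
      obtain ⟨c, C, hc, hC, hb⟩ := ih (by omega) (j+1) (by omega) hj1p
      refine ⟨c/2, C, half_pos hc, hC, fun x hx1 hx2 => ?_⟩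
      have hT1 : uniformKnots p m (j + q + 1) = uniformKnots p m j := by
        rw [hjeq, uk_eq_zero p m p le_rfl, uk_eq_zero p m j hj2]
      have hD : uniformKnots p m (j + q + 2) = H := by
        have : j + q + 2 = p + 1 := by omega
        rw [this, uk_p1, ← hHdef]
      have hj1z : uniformKnots p m (j + 1) = 0 := uk_eq_zero p m (j+1) hj1p
      rw [bspline_succ_eq, if_pos hT1, if_neg (by rw [hD, hj1z]; exact ne_of_gt hH), hD, hj1z]
      have hexp : j - (p - (q+1)) = 0 := by omega
      have hexp2 : (j+1) - (p - q) = 0 := by omega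
      obtain ⟨hlow, hup⟩ := hb x hx1 hx2
      rw [hexp2] at hlow hup
      simp only [pow_zero, mul_one] at hlow hup
      rw [hexp]
      simp only [pow_zero, mul_one, zero_add, sub_zero]
      have hfac1 : (H - x)/H ≤ 1 := by
        rw [div_le_one hH]; linarith
      have hfac2 : (1:ℝ)/2 ≤ (H - x)/H := by
        rw [le_div_iff₀ hH]; linarith
      have hbnn : 0 ≤ bspline (uniformKnots p m) q (j+1) x := bspline_nonneg _ hmono _ _ _
      constructor
      · calc c/2 = (1/2) * c := by ring
          _ ≤ (H - x)/H * bspline (uniformKnots p m) q (j+1) x :=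
            mul_le_mul hfac2 hlow (le_of_lt hc) (by linarith)
      · calc (H - x)/H * bspline (uniformKnots p m) q (j+1) x
            ≤ 1 * C := mul_le_mul hfac1 hup hbnn one_pos.le
          _ = C := one_mul C
    · -- Case B : p - q ≤ j ≤ p
      have hA_pos : 0 < uniformKnots p m (j + q + 1) := uk_pos p m _ (by omega)
      have hA_geH : H ≤ uniformKnots p m (j + q + 1) := by
        have : j + q + 1 = p + (j + q + 1 - p) := by omega
        rw [this]; exact uk_add_ge p m _ (by omega)
      have hA_le1 : uniformKnots p m (j + q + 1) ≤ 1 := uk_le_one p m _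
      have hjz : uniformKnots p m j = 0 := uk_eq_zero p m j hj2
      have hne1 : uniformKnots p m (j + q + 1) ≠ uniformKnots p m j := by
        rw [hjz]; exact ne_of_gt hA_pos
      obtain ⟨c1, C1, hc1, hC1, hb1⟩ := ih (by omega) j hcase hj2
      rcases Nat.eq_or_lt_of_le hj2 with hjp | hjp
      · -- Case B1 : j = p
        refine ⟨c1, C1/H, hc1, div_pos hC1 hH, fun x hx1 hx2 => ?_⟩
        have hzero2 : bspline (uniformKnots p m) q (j+1) x = 0 := by
          apply bspline_zero_of_lt _ hmono
          rw [hjp, uk_p1, ← hHdef]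
          linarith
        rw [bspline_succ_eq, hzero2]
        have hT2 : (if uniformKnots p m (j + q + 2) = uniformKnots p m (j + 1) then (0:ℝ)
            else (uniformKnots p m (j + q + 2) - x) / (uniformKnots p m (j + q + 2) - uniformKnots p m (j + 1)) * 0) = 0 := by
          split <;> ring
        rw [hT2, add_zero, if_neg hne1, hjz, sub_zero, sub_zero]
        obtain ⟨hlow, hup⟩ := hb1 x hx1 hx2
        have hexp : j - (p - (q+1)) = (j - (p - q)) + 1 := by omega
        rw [hexp, pow_succ]
        have hbnn : 0 ≤ bspline (uniformKnots p m) q j x := bspline_nonneg _ hmono _ _ _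
        constructor
        · calc c1 * (x ^ (j - (p - q)) * x) = x * (c1 * x ^ (j - (p - q))) := by ring
            _ ≤ x / uniformKnots p m (j + q + 1) * bspline (uniformKnots p m) q j x := by
              apply mul_le_mul _ hlow (by positivity) (div_nonneg hx1.le hA_pos.le)
              rw [le_div_iff₀ hA_pos]
              nlinarith
        · calc x / uniformKnots p m (j + q + 1) * bspline (uniformKnots p m) q j x
              ≤ x / H * (C1 * x ^ (j - (p - q))) := by
                apply mul_le_mul _ hup hbnn (by positivity)
                gcongr
            _ = C1/H * (x ^ (j - (p - q)) * x) := by ring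
      · -- Case B2 : p - q ≤ j ≤ p - 1
        have hj1p : j + 1 ≤ p := hjp
        obtain ⟨c2, C2, hc2, hC2, hb2⟩ := ih (by omega) (j+1) (by omega) hj1p
        have hj1z : uniformKnots p m (j + 1) = 0 := uk_eq_zero p m (j+1) hj1p
        have hD_pos : 0 < uniformKnots p m (j + q + 2) := uk_pos p m _ (by omega)
        have hD_geH : H ≤ uniformKnots p m (j + q + 2) := by
          have : j + q + 2 = p + (j + q + 2 - p) := by omega
          rw [this]; exact uk_add_ge p m _ (by omega)
        have hne2 : uniformKnots p m (j + q + 2) ≠ uniformKnots p m (j + 1) := by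
          rw [hj1z]; exact ne_of_gt hD_pos
        refine ⟨c1 + c2/2, C1/H + C2, by linarith, add_pos (div_pos hC1 hH) hC2, fun x hx1 hx2 => ?_⟩
        obtain ⟨hlow1, hup1⟩ := hb1 x hx1 hx2
        obtain ⟨hlow2, hup2⟩ := hb2 x hx1 hx2
        have hbnn1 : 0 ≤ bspline (uniformKnots p m) q j x := bspline_nonneg _ hmono _ _ _
        have hbnn2 : 0 ≤ bspline (uniformKnots p m) q (j+1) x := bspline_nonneg _ hmono _ _ _
        rw [bspline_succ_eq, if_neg hne1, if_neg hne2, hjz, hj1z, sub_zero, sub_zero, sub_zero]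
        have hexp : j - (p - (q+1)) = (j - (p - q)) + 1 := by omega
        have hexp2 : (j+1) - (p - q) = (j - (p - q)) + 1 := by omega
        rw [hexp, pow_succ]
        rw [hexp2, pow_succ] at hlow2 hup2
        set D := uniformKnots p m (j + q + 2) with hDdef
        set A := uniformKnots p m (j + q + 1) with hAdef
        have hfacD1 : (D - x)/D ≤ 1 := by
          rw [div_le_one hD_pos]; linarith
        have hfacD2 : (1:ℝ)/2 ≤ (D - x)/D := by
          rw [le_div_iff₀ hD_pos]; nlinarith
        have hT1low : x * (c1 * x ^ (j - (p - q))) ≤ x / A * bspline (uniformKnots p m) q j x := by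
          apply mul_le_mul _ hlow1 (by positivity) (div_nonneg hx1.le hA_pos.le)
          rw [le_div_iff₀ hA_pos]
          nlinarith
        have hT1up : x / A * bspline (uniformKnots p m) q j x ≤ x / H * (C1 * x ^ (j - (p - q))) := by
          apply mul_le_mul _ hup1 hbnn1 (by positivity)
          gcongr
        have hT2low : (1/2) * (c2 * (x ^ (j - (p - q)) * x)) ≤ (D - x)/D * bspline (uniformKnots p m) q (j+1) x :=
          mul_le_mul hfacD2 hlow2 (by positivity) (div_nonneg (by linarith) hD_pos.le)
        have hT2up : (D - x)/D * bspline (uniformKnots p m) q (j+1) x ≤ 1 * (C2 * (x ^ (j - (p - q)) * x)) :=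
          mul_le_mul hfacD1 hup2 hbnn2 one_pos.le
        constructor
        · nlinarith [hT1low, hT2low]
        · calc x / A * bspline (uniformKnots p m) q j x + (D - x)/D * bspline (uniformKnots p m) q (j+1) x
              ≤ x / H * (C1 * x ^ (j - (p - q))) + 1 * (C2 * (x ^ (j - (p - q)) * x)) := by
                exact add_le_add hT1up hT2up
            _ = (C1/H + C2) * (x ^ (j - (p - q)) * x) := by ring

set_option maxHeartbeats 1000000 in
theorem main_li (p m : ℕ) :
    LinearIndependent ℝ
      (fun j : Fin (2 ^ m + p) =>
        (Set.Ico (0 : ℝ) 1).restrict (bspline (uniformKnots p m) p j)) := by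
  have hH : (0:ℝ) < 1/2^m := by positivity
  have h2m : 1 ≤ 2^m := Nat.one_le_two_pow
  have hmono := uk_mono p m
  rw [Fintype.linearIndependent_iff]
  intro g hg
  have hpt : ∀ x : ℝ, 0 ≤ x → x < 1 →
      ∑ l : Fin (2^m+p), g l * bspline (uniformKnots p m) p l.val x = 0 := by
    intro x hx0 hx1
    have h := congrFun hg ⟨x, hx0, hx1⟩
    simpa [Finset.sum_apply, Set.restrict] using h
  suffices key : ∀ j : ℕ, ∀ hj : j < 2^m + p, g ⟨j, hj⟩ = 0 by
    intro i; exact key i.1 i.2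
  intro j
  induction j using Nat.strong_induction_on with
  | _ j ih =>
  intro hj
  by_cases hjp : j ≤ p
  · -- small j : asymptotic argument near 0
    have hex : ∀ l : ℕ, ∃ c C : ℝ, 0 < c ∧ 0 < C ∧ (l ≤ p → ∀ x : ℝ, 0 < x → x < 1/2^m/2 →
        c * x ^ l ≤ bspline (uniformKnots p m) p l x ∧
        bspline (uniformKnots p m) p l x ≤ C * x ^ l) := by
      intro l
      by_cases hl : l ≤ p
      · obtain ⟨c, C, hc, hC, hb⟩ := bspline_bounds p m p le_rfl l (by omega) hl
        refine ⟨c, C, hc, hC, fun _ x hx1 hx2 => ?_⟩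
        have h := hb x hx1 hx2
        simpa using h
      · exact ⟨1, 1, one_pos, one_pos, fun h => absurd h hl⟩
    choose cc CC hcc hCC hbb using hex
    set jf : Fin (2^m+p) := ⟨j, hj⟩ with hjf
    classical
    set T : Finset (Fin (2^m+p)) :=
      Finset.univ.filter (fun l : Fin (2^m+p) => j < l.val ∧ l.val ≤ p) with hT
    set K : ℝ := ∑ l ∈ T, |g l| * CC l.val with hK
    have hKnn : 0 ≤ K := Finset.sum_nonneg fun l _ => mul_nonneg (abs_nonneg _) (hCC l.val).le
    have hmain : ∀ x : ℝ, 0 < x → x < 1/2^m/2 → |g jf| * cc j ≤ K * x := by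
      intro x hx1 hx2
      have hxlt1 : x < 1 := by
        have h1 : (1:ℝ)/2^m ≤ 1 := by
          rw [div_le_one (by positivity)]; exact_mod_cast one_le_pow₀ (by norm_num : (1:ℝ) ≤ 2)
        linarith
      have hx01 : x ≤ 1 := hxlt1.le
      -- reduce the global sum to jf and T
      have hred : g jf * bspline (uniformKnots p m) p j x
          + ∑ l ∈ T, g l * bspline (uniformKnots p m) p l.val x = 0 := by
        have hsub : insert jf T ⊆ Finset.univ := Finset.subset_univ _
        have hjfT : jf ∉ T := by
          simp [hT, hjf]
        have hvanish : ∀ l ∈ Finset.univ, l ∉ insert jf T →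
            g l * bspline (uniformKnots p m) p l.val x = 0 := by
          intro l _ hl
          simp only [Finset.mem_insert, hT, Finset.mem_filter, Finset.mem_univ, true_and,
            not_or, not_and, not_lt] at hl
          obtain ⟨hne, hlor⟩ := hl
          rcases Nat.lt_or_ge l.val j with hlt | hge
          · have : g l = 0 := ih l.val hlt l.isLt
            rw [this, zero_mul]
          · have hgt : p < l.val := by
              have : l.val ≠ j := fun hc => hne (Fin.ext hc)
              rcases Nat.lt_or_ge p l.val with h | h
              · exact h
              · omega
            have : bspline (uniformKnots p m) p l.val x = 0 := by
              apply bspline_zero_of_lt _ hmono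
              calc x < 1/2^m/2 := hx2
                _ < 1/2^m := by linarith
                _ = uniformKnots p m (p+1) := (uk_p1 p m).symm
                _ ≤ uniformKnots p m l.val := hmono (by omega)
            rw [this, mul_zero]
        have := (Finset.sum_subset hsub hvanish).symm
        rw [Finset.sum_insert hjfT] at this
        rw [← this]
        exact hpt x (le_of_lt hx1) hxlt1
      have hbj := hbb j hjp x hx1 hx2
      have hbjnn : 0 ≤ bspline (uniformKnots p m) p j x := bspline_nonneg _ hmono _ _ _
      have step1 : |g jf| * (cc j * x ^ j) ≤ |g jf| * bspline (uniformKnots p m) p j x := by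
        apply mul_le_mul_of_nonneg_left hbj.1 (abs_nonneg _)
      have step2 : |g jf| * bspline (uniformKnots p m) p j x
          = |g jf * bspline (uniformKnots p m) p j x| := by
        rw [abs_mul, abs_of_nonneg hbjnn]
      have step3 : |g jf * bspline (uniformKnots p m) p j x|
          ≤ ∑ l ∈ T, |g l| * bspline (uniformKnots p m) p l.val x := by
        have : g jf * bspline (uniformKnots p m) p j x
            = - ∑ l ∈ T, g l * bspline (uniformKnots p m) p l.val x := by linarith
        rw [this, abs_neg]
        calc |∑ l ∈ T, g l * bspline (uniformKnots p m) p l.val x|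
            ≤ ∑ l ∈ T, |g l * bspline (uniformKnots p m) p l.val x| := Finset.abs_sum_le_sum_abs _ _
          _ = ∑ l ∈ T, |g l| * bspline (uniformKnots p m) p l.val x := by
              apply Finset.sum_congr rfl
              intro l _
              rw [abs_mul, abs_of_nonneg (bspline_nonneg _ hmono _ _ _)]
      have step4 : ∑ l ∈ T, |g l| * bspline (uniformKnots p m) p l.val x
          ≤ (K * x) * x ^ j := by
        rw [hK, Finset.sum_mul, Finset.sum_mul]
        apply Finset.sum_le_sum
        intro l hl
        simp only [hT, Finset.mem_filter, Finset.mem_univ, true_and] at hl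
        obtain ⟨hlj, hlp⟩ := hl
        have hb := (hbb l.val hlp x hx1 hx2).2
        calc |g l| * bspline (uniformKnots p m) p l.val x
            ≤ |g l| * (CC l.val * x ^ l.val) := mul_le_mul_of_nonneg_left hb (abs_nonneg _)
          _ ≤ |g l| * (CC l.val * (x * x ^ j)) := by
              apply mul_le_mul_of_nonneg_left _ (abs_nonneg _)
              apply mul_le_mul_of_nonneg_left _ (le_of_lt (hCC l.val))
              calc x ^ l.val ≤ x ^ (j+1) :=
                    pow_le_pow_of_le_one (le_of_lt hx1) hx01 (by omega)
                _ = x * x ^ j := by ring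
          _ = |g l| * CC l.val * x * x ^ j := by ring
      have hxj : (0:ℝ) < x ^ j := pow_pos hx1 j
      have : |g jf| * cc j * x ^ j ≤ (K * x) * x ^ j := by
        calc |g jf| * cc j * x ^ j = |g jf| * (cc j * x ^ j) := by ring
          _ ≤ |g jf| * bspline (uniformKnots p m) p j x := step1
          _ = |g jf * bspline (uniformKnots p m) p j x| := step2
          _ ≤ ∑ l ∈ T, |g l| * bspline (uniformKnots p m) p l.val x := step3
          _ ≤ (K * x) * x ^ j := step4
      exact le_of_mul_le_mul_right this hxj
    -- conclude g jf = 0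
    by_contra hne
    have hA : 0 < |g jf| * cc j := mul_pos (abs_pos.mpr hne) (hcc j)
    set A : ℝ := |g jf| * cc j with hA'
    set x0 : ℝ := min (1/2^m/4) (A/(2*(K+1))) with hx0
    have hx0pos : 0 < x0 := lt_min (by positivity) (div_pos hA (by positivity))
    have hx0lt : x0 < 1/2^m/2 := lt_of_le_of_lt (min_le_left _ _) (by linarith)
    have h1 := hmain x0 hx0pos hx0lt
    have h2 : x0 ≤ A/(2*(K+1)) := min_le_right _ _
    have h3 : K * x0 ≤ K * (A/(2*(K+1))) := mul_le_mul_of_nonneg_left h2 hKnn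
    have h4 : K * (A/(2*(K+1))) < A := by
      have hKK : K / (2*(K+1)) < 1 := by
        rw [div_lt_one (by positivity)]; linarith
      calc K * (A/(2*(K+1))) = (K/(2*(K+1))) * A := by ring
        _ < 1 * A := mul_lt_mul_of_pos_right hKK hA
        _ = A := one_mul A
    linarith
  · -- large j : evaluation argument
    push_neg at hjp
    set i : ℕ := j - p with hi
    have hi1 : 1 ≤ i := by omega
    have hiub : i + 1 ≤ 2^m := by omega
    have hxj : uniformKnots p m j = (i:ℝ)/2^m := by
      have h : j = p + i := by omega
      have hle : ((i:ℕ):ℝ)/2^m ≤ 1 := by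
        rw [div_le_one (by positivity)]
        exact_mod_cast (show i ≤ 2^m by omega)
      rw [h, uk_add, min_eq_right hle]
    have hxj1 : uniformKnots p m (j+1) = ((i:ℝ)+1)/2^m := by
      have h : j + 1 = p + (i+1) := by omega
      have hle : (((i+1:ℕ)):ℝ)/2^m ≤ 1 := by
        rw [div_le_one (by positivity)]
        exact_mod_cast hiub
      rw [h, uk_add, min_eq_right hle]
      push_cast; ring
    set x0 : ℝ := (i:ℝ)/2^m + 1/2^m/2 with hx0d
    have hx0a : uniformKnots p m j < x0 := by
      rw [hxj, hx0d]; linarith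
    have hx0b : x0 < uniformKnots p m (j+1) := by
      rw [hxj1, hx0d]
      have heq : ((i:ℝ)+1)/2^m = (i:ℝ)/2^m + 1/2^m := by ring
      rw [heq]; linarith
    have hx0nn : 0 ≤ x0 := by rw [hx0d]; positivity
    have hx0lt1 : x0 < 1 := lt_of_lt_of_le hx0b (uk_le_one p m (j+1))
    have hsum := hpt x0 hx0nn hx0lt1
    set jf : Fin (2^m+p) := ⟨j, hj⟩ with hjf
    have hred : ∑ l : Fin (2^m+p), g l * bspline (uniformKnots p m) p l.val x0
        = g jf * bspline (uniformKnots p m) p j x0 := by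
      apply Finset.sum_eq_single
      · intro l _ hne
        rcases Nat.lt_or_ge l.val j with hlt | hge
        · rw [ih l.val hlt l.isLt, zero_mul]
        · have hgt : j < l.val := by
            have : l.val ≠ j := fun hc => hne (Fin.ext hc)
            omega
          have : bspline (uniformKnots p m) p l.val x0 = 0 := by
            apply bspline_zero_of_lt _ hmono
            exact lt_of_lt_of_le hx0b (hmono (by omega))
          rw [this, mul_zero]
      · intro h; exact absurd (Finset.mem_univ jf) h
    rw [hred] at hsum
    have hpos : 0 < bspline (uniformKnots p m) p j x0 :=
      bspline_pos _ hmono p j x0 hx0a hx0b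
    exact (mul_eq_zero.mp hsum).resolve_right (ne_of_gt hpos)

/-- The B-spline basis functions of degree `p` on the uniform open knot vector `Ξ_{p,m}`
(`k = 2^m + p` control points), restricted to `[0,1)`, are linearly independent over `ℝ`;
consequently the spline space `S_p(Ξ_{p,m})`, as a space of functions on `[0,1)`, has
dimension `2^m + p`. -/
theorem bspline_linearIndependent_and_dim (p m : ℕ) :
    LinearIndependent ℝ
      (fun j : Fin (2 ^ m + p) =>
        (Set.Ico (0 : ℝ) 1).restrict (bspline (uniformKnots p m) p j)) ∧
    Module.finrank ℝ
      (Submodule.span ℝ (Set.range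
        (fun j : Fin (2 ^ m + p) =>
          (Set.Ico (0 : ℝ) 1).restrict (bspline (uniformKnots p m) p j)))) = 2 ^ m + p := by
  refine ⟨main_li p m, ?_⟩
  rw [finrank_span_eq_card (main_li p m), Fintype.card_fin]
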